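/- Let s, x0, x1 be nonzero elements of a field with q = s^2, q ≠ 1, x0^2 x1^2 ≠ q^2, and let β0 = s^{-1}·( (1-q)(1 - q/x0^2)(1 - q/x1^2)/(1 - q^2/(x0^2 x1^2)) - 1 ) - s. Define P1(x) = x + 1/x - β0, and let ω(y) = y(1+s y)/(s(1-y^2)(1-s y)). Then for all x avoiding the poles: Σ_{ε ∈ {+1,-1}} ω(x^ε)·( -x^{-ε}(x0 + s x^ε/x0)(x1 + s x^ε/x1)·P1(q^ε x) + s(x0 + 1/x0)(x1 + 1/x1)·P1(x) ) = -( x0 x1/s^3 + s^3/(x0 x1) )·P1(x). -/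

import Mathlib

/-- weight function of the genus-two skein algebra difference operators -/
def skeinOmega {K : Type*} [Field K] (s y : K) : K :=
  y * (1 + s * y) / (s * (1 - y ^ 2) * (1 - s * y))

set_option maxHeartbeats 4000000 in
theorem stmt_4 {K : Type*} [Field K] (s q x0 x1 x : K) (hs : s ≠ 0) (hsq : s ^ 2 = q)
    (hq1 : q ≠ 1) (hx0 : x0 ≠ 0) (hx1 : x1 ≠ 0) (hden : x0 ^ 2 * x1 ^ 2 ≠ q ^ 2)
    (hx : x ≠ 0) (h1 : x ^ 2 ≠ 1) (h2 : x ≠ s) (h3 : x ≠ s⁻¹) (h4 : s * x ≠ 1)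
    (β0 : K)
    (hβ0 : β0 = s⁻¹ * ((1 - q) * (1 - q / x0 ^ 2) * (1 - q / x1 ^ 2)
        / (1 - q ^ 2 / (x0 ^ 2 * x1 ^ 2)) - 1) - s)
    (P1 : K → K) (hP1 : ∀ y, P1 y = y + 1 / y - β0) :
    skeinOmega s x * (-(1 / x) * (x0 + s * x / x0) * (x1 + s * x / x1) * P1 (q * x)
        + s * (x0 + 1 / x0) * (x1 + 1 / x1) * P1 x)
      + skeinOmega s (1 / x) * (-x * (x0 + s * (1 / x) / x0) * (x1 + s * (1 / x) / x1) * P1 (x / q)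
        + s * (x0 + 1 / x0) * (x1 + 1 / x1) * P1 x)
    = -(x0 * x1 / s ^ 3 + s ^ 3 / (x0 * x1)) * P1 x := by
  subst hsq
  have hq0 : s ^ 2 ≠ 0 := pow_ne_zero 2 hs
  have hA : (1 : K) - x ^ 2 ≠ 0 := fun h => h1 (by linear_combination -h)
  have hB : (1 : K) - s * x ≠ 0 := fun h => h4 (by linear_combination -h)
  have hx2 : x ^ 2 - 1 ≠ 0 := sub_ne_zero.mpr h1
  have hxs : x - s ≠ 0 := sub_ne_zero.mpr h2
  have hE : x0 ^ 2 * x1 ^ 2 - s ^ 4 ≠ 0 := by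
    intro h; exact hden (by linear_combination h)
  have hE' : -s ^ 4 + x0 ^ 2 * x1 ^ 2 ≠ 0 := by
    intro h; exact hE (by linear_combination h)
  have hE2 : x0 ^ 2 * x1 ^ 2 - (s ^ 2) ^ 2 ≠ 0 := by
    intro h; exact hE (by linear_combination h)
  have hE3 : -(s ^ 2) ^ 2 + x0 ^ 2 * x1 ^ 2 ≠ 0 := by
    intro h; exact hE (by linear_combination h)
  have hb : β0 = ((1 - s ^ 2) * (x0 ^ 2 - s ^ 2) * (x1 ^ 2 - s ^ 2)
      - (x0 ^ 2 * x1 ^ 2 - s ^ 4) - s ^ 2 * (x0 ^ 2 * x1 ^ 2 - s ^ 4))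
      / (s * (x0 ^ 2 * x1 ^ 2 - s ^ 4)) := by
    rw [hβ0]
    field_simp [hE', hE2, hE3]
  have hW2 : skeinOmega s (1 / x) = x * (x + s) / (s * (x ^ 2 - 1) * (x - s)) := by
    unfold skeinOmega
    field_simp
  rw [hW2]
  unfold skeinOmega
  simp only [hP1, hb]
  field_simp [hA, hB, hx2, hxs, hE, hE', hE2, hE3]
  have hd1 : s * (1 - x ^ 2) * (1 - s * x) *
      (x * x0 * x1 * (s ^ 2 * x * (s * (x0 ^ 2 * x1 ^ 2 - s ^ 4))) *
        (x0 * x1 * (x * (s * (x0 ^ 2 * x1 ^ 2 - s ^ 4))))) ≠ 0 := by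
    apply_rules [mul_ne_zero, pow_ne_zero]
  have hd2 : s * (x ^ 2 - 1) * (x - s) *
      (x * x0 * (x * x1) * (s ^ 2 * x * (s * (x0 ^ 2 * x1 ^ 2 - s ^ 4))) *
        (x0 * x1 * (x * (s * (x0 ^ 2 * x1 ^ 2 - s ^ 4))))) ≠ 0 := by
    apply_rules [mul_ne_zero, pow_ne_zero]
  have hB' : (1 : K) - x * s ≠ 0 := by rwa [mul_comm x s]
  rw [div_add' _ _ _ hB', mul_div_assoc', div_eq_iff hB']
  ring
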